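/- Let M be a uniquely geodesic metric space with more than one point. Then for every positive integer n, ⌈n²/2⌉ ≤ μ_n(M) ≤ n² − 2n + 2; that is, there exists an n-element subset A ⊆ M with |AT_M(A)| ≥ ⌈n²/2⌉, and every n-element subset A ⊆ M satisfies |AT_M(A)| ≤ n² − 2n + 2. -/

import Mathlib

/-- `(a,b,c)` is a 3-term arithmetic progression in the metric space `M`:
`d(a,b) = d(b,c) = (1/2)·d(a,c)`. -/
def IsAP3 {M : Type*} [MetricSpace M] (a b c : M) : Prop :=
  dist a b = dist b c ∧ dist b c = dist a c / 2

/-- The set of 3-term arithmetic progressions with all entries in `A`. -/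
def AT {M : Type*} [MetricSpace M] (A : Set M) : Set (M × M × M) :=
  {p | p.1 ∈ A ∧ p.2.1 ∈ A ∧ p.2.2 ∈ A ∧ IsAP3 p.1 p.2.1 p.2.2}

/-- `γ : ℝ → M` (restricted to `[0, dist p q]`) is a geodesic from `p` to `q`. -/
def IsGeodesicMap {M : Type*} [MetricSpace M] (p q : M) (γ : ℝ → M) : Prop :=
  γ 0 = p ∧ γ (dist p q) = q ∧
  ∀ s ∈ Set.Icc (0 : ℝ) (dist p q), ∀ t ∈ Set.Icc (0 : ℝ) (dist p q),
    dist (γ s) (γ t) = |s - t|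

/-- `M` is uniquely geodesic. -/
def UniquelyGeodesic (M : Type*) [MetricSpace M] : Prop :=
  ∀ p q : M, p ≠ q →
    (∃ γ : ℝ → M, IsGeodesicMap p q γ) ∧
    ∀ γ₁ γ₂ : ℝ → M, IsGeodesicMap p q γ₁ → IsGeodesicMap p q γ₂ →
      ∀ t ∈ Set.Icc (0 : ℝ) (dist p q), γ₁ t = γ₂ t


lemma geod_through_mid {M : Type*} [MetricSpace M] (hM : UniquelyGeodesic M)
    {a c m : M} (hac : a ≠ c) (h : IsAP3 a m c) :
    ∃ γ : ℝ → M, IsGeodesicMap a c γ ∧ γ (dist a c / 2) = m := by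
  obtain ⟨h1, h2⟩ := h
  set d := dist a c with hd
  have hd0 : 0 < d := dist_pos.2 hac
  have ham : dist a m = d / 2 := by rw [h1, h2]
  have hmc : dist m c = d / 2 := h2
  have hma : m ≠ a := by
    intro e; rw [e, dist_self] at ham; linarith
  have hmcne : m ≠ c := by
    intro e; rw [e, dist_self] at hmc; linarith
  obtain ⟨γ₁, hγ₁⟩ := (hM a m (Ne.symm hma)).1
  obtain ⟨γ₂, hγ₂⟩ := (hM m c hmcne).1
  obtain ⟨g10, g11, g1d⟩ := hγ₁
  obtain ⟨g20, g21, g2d⟩ := hγ₂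
  rw [ham] at g11 g1d
  rw [hmc] at g21 g2d
  refine ⟨fun t => if t ≤ d / 2 then γ₁ t else γ₂ (t - d / 2), ⟨?_, ?_, ?_⟩, ?_⟩
  · simp only [if_pos (by linarith : (0:ℝ) ≤ d / 2)]; exact g10
  · rw [← hd]
    simp only [if_neg (by linarith : ¬ d ≤ d / 2)]
    have : d - d / 2 = d / 2 := by ring
    rw [this, g21]
  · rw [← hd]
    intro s hs t ht
    have key : ∀ u v : ℝ, u ∈ Set.Icc 0 d → v ∈ Set.Icc 0 d → u ≤ d/2 → ¬ v ≤ d/2 →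
        dist (γ₁ u) (γ₂ (v - d/2)) = |u - v| := by
      intro u v hu hv hu2 hv2
      push_neg at hv2
      have hu' : u ∈ Set.Icc (0:ℝ) (d/2) := ⟨hu.1, hu2⟩
      have hv' : v - d/2 ∈ Set.Icc (0:ℝ) (d/2) := ⟨by linarith, by linarith [hv.2]⟩
      have e1 : dist (γ₁ u) m = d/2 - u := by
        have := g1d u hu' (d/2) ⟨by linarith, le_refl _⟩
        rw [g11] at this; rw [this]; rw [abs_of_nonpos (by linarith)]; ring
      have e2 : dist m (γ₂ (v - d/2)) = v - d/2 := by
        have := g2d 0 ⟨le_refl _, by linarith⟩ (v - d/2) hv'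
        rw [g20] at this; rw [this, abs_of_nonpos (by linarith)]; ring
      have e3 : dist a (γ₁ u) = u := by
        have := g1d 0 ⟨le_refl _, by linarith⟩ u hu'
        rw [g10] at this; rw [this, abs_of_nonpos (by linarith [hu.1])]; ring
      have e4 : dist (γ₂ (v - d/2)) c = d - v := by
        have := g2d (v - d/2) hv' (d/2) ⟨by linarith, le_refl _⟩
        rw [g21] at this; rw [this, abs_of_nonpos (by linarith [hv.2])]; ring
      have upper : dist (γ₁ u) (γ₂ (v - d/2)) ≤ v - u := by
        calc dist (γ₁ u) (γ₂ (v - d/2)) ≤ dist (γ₁ u) m + dist m (γ₂ (v - d/2)) := dist_triangle _ _ _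
        _ = v - u := by rw [e1, e2]; ring
      have lower : v - u ≤ dist (γ₁ u) (γ₂ (v - d/2)) := by
        have t1 : d ≤ dist a (γ₁ u) + dist (γ₁ u) (γ₂ (v - d/2)) + dist (γ₂ (v - d/2)) c := by
          calc d = dist a c := hd
          _ ≤ dist a (γ₂ (v - d/2)) + dist (γ₂ (v - d/2)) c := dist_triangle _ _ _
          _ ≤ dist a (γ₁ u) + dist (γ₁ u) (γ₂ (v - d/2)) + dist (γ₂ (v - d/2)) c := by
              have := dist_triangle a (γ₁ u) (γ₂ (v - d/2)); linarith
        rw [e3, e4] at t1; linarith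
      rw [abs_of_nonpos (by linarith)]
      linarith
    by_cases hs2 : s ≤ d/2 <;> by_cases ht2 : t ≤ d/2
    · simp only [if_pos hs2, if_pos ht2]
      exact g1d s ⟨hs.1, hs2⟩ t ⟨ht.1, ht2⟩
    · simp only [if_pos hs2, if_neg ht2]
      exact key s t hs ht hs2 ht2
    · simp only [if_neg hs2, if_pos ht2]
      rw [dist_comm, key t s ht hs ht2 hs2, abs_sub_comm]
    · simp only [if_neg hs2, if_neg ht2]
      push_neg at hs2 ht2
      have := g2d (s - d/2) ⟨by linarith, by linarith [hs.2]⟩ (t - d/2) ⟨by linarith, by linarith [ht.2]⟩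
      rw [this]; congr 1; ring
  · simp only [if_pos (le_refl (d/2))]
    rw [g11]

lemma mid_unique {M : Type*} [MetricSpace M] (hM : UniquelyGeodesic M)
    {a c m m' : M} (hac : a ≠ c) (h : IsAP3 a m c) (h' : IsAP3 a m' c) : m = m' := by
  obtain ⟨γ, hγ, hγm⟩ := geod_through_mid hM hac h
  obtain ⟨γ', hγ', hγm'⟩ := geod_through_mid hM hac h'
  have hd0 : 0 < dist a c := dist_pos.2 hac
  have := (hM a c hac).2 γ γ' hγ hγ' (dist a c / 2) ⟨by linarith, by linarith⟩
  rw [hγm, hγm'] at this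
  exact this


lemma IsAP3.symm' {M : Type*} [MetricSpace M] {a m c : M} (h : IsAP3 a m c) : IsAP3 c m a := by
  obtain ⟨h1, h2⟩ := h
  constructor
  · rw [dist_comm c m, dist_comm m a, ← h1]
  · rw [dist_comm m a, dist_comm c a, h1]
    exact h2

open Finset in
lemma cut_lemma {M : Type*} [MetricSpace M] [DecidableEq M] (s S : Finset M) (hS : S ⊆ s)
    (h1 : S.Nonempty) (h2 : (s \ S).Nonempty) :
    ∃ a ∈ S, ∃ c ∈ s \ S, a ≠ c ∧ ∀ m ∈ s, ¬ IsAP3 a m c := by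
  classical
  obtain ⟨⟨a, c⟩, hmem, hmin⟩ :=
    Finset.exists_min_image (S ×ˢ (s \ S)) (fun q => dist q.1 q.2) (h1.product h2)
  rw [mem_product] at hmem
  obtain ⟨haS, hcS⟩ := hmem
  have hcs := (mem_sdiff.1 hcS).1
  have hcnS := (mem_sdiff.1 hcS).2
  have hac : a ≠ c := fun h => hcnS (h ▸ haS)
  refine ⟨a, haS, c, hcS, hac, ?_⟩
  intro m hms hap
  obtain ⟨e1, e2⟩ := hap
  set d := dist a c with hd
  have hd0 : 0 < d := dist_pos.2 hac
  have ham : dist a m = d / 2 := by rw [e1, e2]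
  have hmc : dist m c = d / 2 := e2
  by_cases hmS : m ∈ S
  · have : d ≤ dist m c := hmin (m, c) (mem_product.2 ⟨hmS, hcS⟩)
    rw [hmc] at this; linarith
  · have hmsd : m ∈ s \ S := mem_sdiff.2 ⟨hms, hmS⟩
    have : d ≤ dist a m := hmin (a, m) (mem_product.2 ⟨haS, hmsd⟩)
    rw [ham] at this; linarith

open Finset in
lemma growth_lemma {M : Type*} [MetricSpace M] [DecidableEq M] (s : Finset M) (hs : s.Nonempty)
    [DecidablePred fun q : M × M => q.1 ≠ q.2 ∧ ∀ m ∈ s, ¬ IsAP3 q.1 m q.2] :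
    2 * (s.card - 1) ≤
      ((s ×ˢ s).filter (fun q : M × M => q.1 ≠ q.2 ∧ ∀ m ∈ s, ¬ IsAP3 q.1 m q.2)).card := by
  classical
  set Q : Finset M → Finset (M × M) :=
    fun B => ((B ×ˢ B).filter (fun q : M × M => q.1 ≠ q.2 ∧ ∀ m ∈ s, ¬ IsAP3 q.1 m q.2)) with hQ
  suffices h : ∀ k : ℕ, k + 1 ≤ s.card → ∃ B ⊆ s, B.card = k + 1 ∧ 2 * k ≤ (Q B).card by
    obtain ⟨k, hk⟩ : ∃ k, s.card = k + 1 := Nat.exists_eq_succ_of_ne_zero (by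
      exact Nat.pos_iff_ne_zero.1 (card_pos.2 hs))
    obtain ⟨B, hBs, hBcard, hBQ⟩ := h k (by omega)
    have hBeq : B = s := Finset.eq_of_subset_of_card_le hBs (by omega)
    have hQc : #(Q B) = #(Q s) := by rw [hBeq]
    show 2 * (#s - 1) ≤ #(Q s)
    omega
  intro k
  induction k with
  | zero =>
    intro _
    obtain ⟨a, ha⟩ := hs
    exact ⟨{a}, by simpa using ha, by simp, by simp⟩
  | succ m ih =>
    intro hm
    obtain ⟨B, hBs, hBcard, hBQ⟩ := ih (by omega)
    have hBne : B.Nonempty := card_pos.1 (by omega)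
    have hsdne : (s \ B).Nonempty := by
      rw [← card_pos, card_sdiff_of_subset hBs]; omega
    obtain ⟨a, haB, c, hcB, hac, hnomid⟩ := cut_lemma s B hBs hBne hsdne
    have hcs := (mem_sdiff.1 hcB).1
    have hcnB := (mem_sdiff.1 hcB).2
    refine ⟨insert c B, insert_subset hcs hBs, by rw [card_insert_of_notMem hcnB, hBcard], ?_⟩
    have hsub : insert (a, c) (insert (c, a) (Q B)) ⊆ Q (insert c B) := by
      intro q hq
      simp only [mem_insert] at hq
      rcases hq with rfl | rfl | hq
      · simp only [hQ, mem_filter, mem_product]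
        exact ⟨⟨mem_insert_of_mem haB, mem_insert_self c B⟩, hac, hnomid⟩
      · simp only [hQ, mem_filter, mem_product]
        exact ⟨⟨mem_insert_self c B, mem_insert_of_mem haB⟩, hac.symm,
          fun m hm hap => hnomid m hm hap.symm'⟩
      · simp only [hQ, mem_filter, mem_product, mem_insert] at hq ⊢
        exact ⟨⟨Or.inr hq.1.1, Or.inr hq.1.2⟩, hq.2⟩
    have hno1 : (a, c) ∉ insert (c, a) (Q B) := by
      simp only [mem_insert, hQ, mem_filter, mem_product, Prod.mk.injEq]
      push_neg
      exact ⟨fun h _ => hac h, fun h => absurd h.2 hcnB⟩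
    have hno2 : (c, a) ∉ Q B := by
      simp only [hQ, mem_filter, mem_product]
      intro h
      exact hcnB h.1.1
    calc 2 * (m + 1) ≤ (Q B).card + 2 := by omega
    _ = (insert (a, c) (insert (c, a) (Q B))).card := by
        rw [card_insert_of_notMem hno1, card_insert_of_notMem hno2]
    _ ≤ (Q (insert c B)).card := card_le_card hsub


open Finset in
lemma parity_count (n : ℕ) :
    (n^2+1)/2 ≤ (((range n) ×ˢ (range n)).filter (fun q : ℕ × ℕ => (q.1+q.2) % 2 = 0)).card := by
  set E := ((range n) ×ˢ (range n)).filter (fun q : ℕ × ℕ => (q.1+q.2) % 2 = 0) with hE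
  set im1 := ((range ((n+1)/2)) ×ˢ (range ((n+1)/2))).image (fun p : ℕ × ℕ => (2*p.1, 2*p.2)) with him1
  set im2 := ((range (n/2)) ×ˢ (range (n/2))).image (fun p : ℕ × ℕ => (2*p.1+1, 2*p.2+1)) with him2
  have hsub : im1 ∪ im2 ⊆ E := by
    intro q hq
    simp only [him1, him2, mem_union, mem_image, mem_product, mem_range] at hq
    simp only [hE, mem_filter, mem_product, mem_range]
    rcases hq with ⟨p, ⟨hp1, hp2⟩, rfl⟩ | ⟨p, ⟨hp1, hp2⟩, rfl⟩ <;>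
      refine ⟨⟨by omega, by omega⟩, by omega⟩
  have hdisj : Disjoint im1 im2 := by
    rw [Finset.disjoint_left]
    rintro q hq1 hq2
    simp only [him1, him2, mem_image] at hq1 hq2
    obtain ⟨p, _, rfl⟩ := hq1
    obtain ⟨p', _, he⟩ := hq2
    rw [Prod.mk.injEq] at he
    omega
  have hinj1 : Function.Injective (fun p : ℕ × ℕ => (2*p.1, 2*p.2)) := by
    rintro ⟨a, b⟩ ⟨a', b'⟩ h
    simp only [Prod.mk.injEq] at h ⊢
    omega
  have hinj2 : Function.Injective (fun p : ℕ × ℕ => (2*p.1+1, 2*p.2+1)) := by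
    rintro ⟨a, b⟩ ⟨a', b'⟩ h
    simp only [Prod.mk.injEq] at h ⊢
    omega
  have hc : (im1 ∪ im2).card = (n+1)/2 * ((n+1)/2) + n/2 * (n/2) := by
    rw [card_union_of_disjoint hdisj, him1, him2, card_image_of_injective _ hinj1,
      card_image_of_injective _ hinj2]
    simp
  have := card_le_card hsub
  rw [hc] at this
  refine le_trans ?_ this
  rcases Nat.even_or_odd n with ⟨k, hk⟩ | ⟨k, hk⟩
  · subst hk
    rw [show (k+k+1)/2 = k from by omega, show (k+k)/2 = k from by omega,
      show (k+k)^2 = 4*(k*k) from by ring]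
    generalize k*k = K
    omega
  · subst hk
    rw [show (2*k+1+1)/2 = k+1 from by omega, show (2*k+1)/2 = k from by omega,
      show (2*k+1)^2 = 4*(k*k)+4*k+1 from by ring,
      show (k+1)*(k+1) = k*k+2*k+1 from by ring]
    generalize k*k = K
    omega

open Finset in
lemma lower_bound {M : Type*} [MetricSpace M] [Nontrivial M]
    (hM : UniquelyGeodesic M) (n : ℕ) (hn : 0 < n) :
    ∃ A : Set M, A.Finite ∧ A.ncard = n ∧ (n ^ 2 + 1) / 2 ≤ (AT A).ncard := by
  classical
  obtain ⟨p, q, hpq⟩ := exists_pair_ne M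
  obtain ⟨γ, g0, g1, gd⟩ := (hM p q hpq).1
  set d := dist p q with hd
  have hd0 : 0 < d := dist_pos.2 hpq
  set ε := d / n with hε
  have hε0 : 0 < ε := by positivity
  set x : ℕ → M := fun i => γ (i * ε) with hx
  have hmem : ∀ i : ℕ, i < n → (i:ℝ) * ε ∈ Set.Icc (0:ℝ) d := by
    intro i hi
    constructor
    · positivity
    · have : (i:ℝ) ≤ n := by exact_mod_cast le_of_lt hi
      calc (i:ℝ) * ε ≤ n * ε := by nlinarith
      _ = d := by rw [hε]; field_simp
  have hdist : ∀ i j : ℕ, i < n → j < n → dist (x i) (x j) = |(i:ℝ) - j| * ε := by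
    intro i j hi hj
    rw [hx]
    simp only
    rw [gd _ (hmem i hi) _ (hmem j hj)]
    rw [← sub_mul, abs_mul, abs_of_pos hε0]
  have hinjOn : Set.InjOn x (range n) := by
    intro i hi j hj hij
    simp only [coe_range, Set.mem_Iio] at hi hj
    by_contra hne
    have : dist (x i) (x j) = 0 := by rw [hij, dist_self]
    rw [hdist i j hi hj] at this
    have : |(i:ℝ) - j| = 0 := by
      rcases mul_eq_zero.1 this with h | h
      · exact h
      · exact absurd h (ne_of_gt hε0)
    rw [abs_eq_zero, sub_eq_zero] at this
    exact hne (by exact_mod_cast this)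
  set sA := (range n).image x with hsA
  refine ⟨↑sA, finite_toSet _, ?_, ?_⟩
  · rw [Set.ncard_coe_finset, hsA, Finset.card_image_of_injOn hinjOn, card_range]
  · set E := ((range n) ×ˢ (range n)).filter (fun q : ℕ × ℕ => (q.1+q.2) % 2 = 0) with hE
    set F : ℕ × ℕ → M × M × M := fun q => (x q.1, x ((q.1+q.2)/2), x q.2) with hF
    have hEmem : ∀ q : ℕ × ℕ, q ∈ E → q.1 < n ∧ q.2 < n ∧ (q.1+q.2) % 2 = 0 := by
      intro q hq
      simp only [hE, mem_filter, mem_product, mem_range] at hq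
      exact ⟨hq.1.1, hq.1.2, hq.2⟩
    have hsubAT : ↑(E.image F) ⊆ AT (↑sA : Set M) := by
      intro z hz
      simp only [coe_image, Set.mem_image, mem_coe] at hz
      obtain ⟨⟨i, k⟩, hq, rfl⟩ := hz
      obtain ⟨hi, hk, hpar⟩ := hEmem _ hq
      simp only at hi hk hpar
      set j := (i+k)/2 with hj
      have hj2 : 2 * j = i + k := by omega
      have hjn : j < n := by omega
      have hxmem : ∀ i : ℕ, i < n → x i ∈ (↑sA : Set M) := by
        intro i hi
        simp only [hsA, coe_image, Set.mem_image, mem_coe, mem_range]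
        exact ⟨i, by simpa using hi, rfl⟩
      refine ⟨hxmem i hi, hxmem j hjn, hxmem k hk, ?_, ?_⟩
      · rw [hdist i j hi hjn, hdist j k hjn hk]
        congr 1
        have e1 : (i:ℝ) - j = ((i:ℝ) - k)/2 := by
          have : (2:ℝ) * j = i + k := by exact_mod_cast hj2
          linarith
        have e2 : (j:ℝ) - k = ((i:ℝ) - k)/2 := by
          have : (2:ℝ) * j = i + k := by exact_mod_cast hj2
          linarith
        rw [e1, e2]
      · rw [hdist j k hjn hk, hdist i k hi hk]
        have e2 : (j:ℝ) - k = ((i:ℝ) - k)/2 := by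
          have : (2:ℝ) * j = i + k := by exact_mod_cast hj2
          linarith
        rw [e2, abs_div]
        rw [abs_of_pos (by norm_num : (0:ℝ) < 2)]
        ring
    have hFinj : Set.InjOn F E := by
      intro q hq q' hq' he
      obtain ⟨h1, h2, h3⟩ := hEmem _ hq
      obtain ⟨h1', h2', h3'⟩ := hEmem _ hq'
      rw [hF] at he
      simp only [Prod.mk.injEq] at he
      have e1 : q.1 = q'.1 := hinjOn (by simpa using h1) (by simpa using h1') he.1
      have e2 : q.2 = q'.2 := hinjOn (by simpa using h2) (by simpa using h2') he.2.2
      exact Prod.ext e1 e2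
    have hATfin : (AT (↑sA : Set M)).Finite := by
      apply Set.Finite.subset (((finite_toSet sA).prod ((finite_toSet sA).prod (finite_toSet sA))))
      intro z hz
      exact ⟨hz.1, hz.2.1, hz.2.2.1⟩
    calc (n^2+1)/2 ≤ E.card := parity_count n
    _ = (E.image F).card := (Finset.card_image_of_injOn hFinj).symm
    _ = (↑(E.image F) : Set (M × M × M)).ncard := by rw [Set.ncard_coe_finset]
    _ ≤ (AT (↑sA : Set M)).ncard := Set.ncard_le_ncard hsubAT hATfin

open Finset in
lemma upper_bound {M : Type*} [MetricSpace M]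
    (hmu : ∀ {a c m m' : M}, a ≠ c → IsAP3 a m c → IsAP3 a m' c → m = m')
    (n : ℕ) (hn : 0 < n) (A : Set M) (hA : A.Finite) (hcard : A.ncard = n) :
    (AT A).ncard ≤ n ^ 2 + 2 - 2 * n := by
  classical
  set s := hA.toFinset with hs
  have hscard : s.card = n := by
    rw [hs, ← Set.ncard_eq_toFinset_card A hA, hcard]
  have hAs : A = ↑s := by rw [hs, Set.Finite.coe_toFinset]
  set T := (s ×ˢ s ×ˢ s).filter (fun p : M × M × M => IsAP3 p.1 p.2.1 p.2.2) with hT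
  have hATT : AT A = ↑T := by
    ext ⟨a, b, c⟩
    simp only [AT, Set.mem_setOf_eq, hT, coe_filter, mem_product, hAs, mem_coe]
    tauto
  rw [hATT, Set.ncard_coe_finset]
  set Tdiag := T.filter (fun p : M × M × M => p.1 = p.2.2) with hTdiag
  set Tnd := T.filter (fun p : M × M × M => ¬ p.1 = p.2.2) with hTnd
  have hsplit : Tdiag.card + Tnd.card = T.card :=
    card_filter_add_card_filter_not _
  -- diagonal triples
  have hdiagchar : ∀ p ∈ Tdiag, p = (p.1, p.1, p.1) := by
    rintro ⟨a, b, c⟩ hp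
    simp only [hTdiag, hT, mem_filter, mem_product] at hp
    obtain ⟨⟨⟨h1, h2, h3⟩, e1, e2⟩, heq⟩ := hp
    simp only at heq e1 e2 ⊢
    have hac0 : dist a c = 0 := by rw [heq, dist_self]
    rw [hac0] at e2
    simp only [zero_div] at e2
    have hbc : b = c := dist_eq_zero.1 e2
    rw [Prod.mk.injEq, Prod.mk.injEq]
    exact ⟨rfl, hbc.trans heq.symm, heq.symm⟩
  have hdiag : Tdiag.card ≤ n := by
    rw [← hscard]
    apply card_le_card_of_injOn (fun p => p.1)
    · intro p hp
      simp only [mem_coe, hTdiag, hT, mem_filter, mem_product] at hp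
      exact hp.1.1.1
    · intro p hp p' hp' he
      rw [hdiagchar p (mem_coe.1 hp), hdiagchar p' (mem_coe.1 hp')]
      simp only at he
      rw [he]
  -- nondegenerate triples inject into pairs with midpoint
  set P := (s ×ˢ s).filter (fun q : M × M => q.1 ≠ q.2 ∧ ∃ m ∈ s, IsAP3 q.1 m q.2) with hP
  have hnd : Tnd.card ≤ P.card := by
    apply card_le_card_of_injOn (fun p : M × M × M => (p.1, p.2.2))
    · intro p hp
      simp only [mem_coe, hTnd, hT, mem_filter, mem_product] at hp
      obtain ⟨⟨⟨h1, h2, h3⟩, hap⟩, hne⟩ := hp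
      simp only [mem_coe, hP, mem_filter, mem_product]
      exact ⟨⟨h1, h3⟩, hne, p.2.1, h2, hap⟩
    · rintro ⟨a, b, c⟩ hp ⟨a', b', c'⟩ hp' he
      simp only [Prod.mk.injEq] at he
      obtain ⟨rfl, rfl⟩ := he
      simp only [mem_coe, hTnd, hT, mem_filter, mem_product] at hp hp'
      have hb : b = b' := hmu hp.2 hp.1.2 hp'.1.2
      rw [hb]
  -- pairs with and without midpoints partition off-diagonal pairs
  set Q := (s ×ˢ s).filter (fun q : M × M => q.1 ≠ q.2 ∧ ∀ m ∈ s, ¬ IsAP3 q.1 m q.2) with hQ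
  set D := (s ×ˢ s).filter (fun q : M × M => ¬ q.1 = q.2) with hD
  have hPQdisj : Disjoint P Q := by
    rw [Finset.disjoint_left]
    rintro ⟨a, c⟩ hp hq
    simp only [hP, hQ, mem_filter, mem_product] at hp hq
    obtain ⟨m, hm, hap⟩ := hp.2.2
    exact hq.2.2 m hm hap
  have hPQ : P.card + Q.card ≤ D.card := by
    rw [← card_union_of_disjoint hPQdisj]
    apply card_le_card
    intro q hq
    simp only [hP, hQ, hD, mem_union, mem_filter, mem_product] at hq ⊢
    tauto
  have hDdiag : (s ×ˢ s).filter (fun q : M × M => q.1 = q.2) = s.image (fun a => (a, a)) := by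
    ext ⟨a, b⟩
    simp only [mem_filter, mem_product, mem_image, Prod.mk.injEq]
    constructor
    · rintro ⟨⟨h1, _⟩, h3⟩
      exact ⟨a, h1, rfl, h3⟩
    · rintro ⟨x, hx, rfl, rfl⟩
      exact ⟨⟨hx, hx⟩, rfl⟩
  have hDcard : D.card + n = n * n := by
    have h1 : ((s ×ˢ s).filter (fun q : M × M => q.1 = q.2)).card + D.card = n * n := by
      rw [hD, card_filter_add_card_filter_not (p := fun q : M × M => q.1 = q.2),
        card_product, hscard]
    rw [hDdiag, card_image_of_injective _ (fun a a' h => by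
      simpa [Prod.mk.injEq] using h), hscard] at h1
    omega
  have hQcard : 2 * (n - 1) ≤ Q.card := by
    rw [hQ, ← hscard]
    exact growth_lemma s (card_pos.1 (by omega))
  rw [pow_two]
  omega

/-- In a uniquely geodesic metric space with more than one point,
`⌈n²/2⌉ ≤ μ_n(M) ≤ n² − 2n + 2`. -/
theorem mu_bounds_uniquely_geodesic {M : Type*} [MetricSpace M] [Nontrivial M]
    (hM : UniquelyGeodesic M) (n : ℕ) (hn : 0 < n) :
    (∃ A : Set M, A.Finite ∧ A.ncard = n ∧ (n ^ 2 + 1) / 2 ≤ (AT A).ncard) ∧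
    (∀ A : Set M, A.Finite → A.ncard = n → (AT A).ncard ≤ n ^ 2 + 2 - 2 * n) := by
  constructor
  · exact lower_bound hM n hn
  · intro A hA hc
    exact upper_bound (fun h h1 h2 => mid_unique hM h h1 h2) n hn A hA hc
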